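/- (Closed-form all-order couplings of the Restricted Boltzmann Machine) Let m, n ≥ 1, b ∈ ℝ^m, c ∈ ℝ^n, w ∈ ℝ^{n×m}, and define the marginal RBM distribution on v ∈ {0,1}^m by p(v) = (1/Z) · ∏_{j=1}^m e^{b_j v_j} · ∏_{i=1}^n (1 + e^{c_i + Σ_{j=1}^m w_{ij} v_j}), with Z the normalizing constant. Then for any two distinct visible units j_1 ≠ j_2, writing e_S for the configuration equal to 1 exactly on S, the multiplicative 2-point interaction satisfies [p(e_{\{j_1,j_2\}}) · p(e_∅)] / [p(e_{\{j_1\}}) · p(e_{\{j_2\}})] = ∏_{i=1}^n [(1 + e^{c_i + w_{i j_1} + w_{i j_2}})(1 + e^{c_i})] / [(1 + e^{c_i + w_{i j_1}})(1 + e^{c_i + w_{i j_2}})]; in particular the interaction is independent of the visible biases b_j and of the partition function Z. -/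
import Mathlib


/-- Closed-form 2-point coupling of the Restricted Boltzmann Machine: the multiplicative
2-point interaction between two distinct visible units `j₁ ≠ j₂` of the marginal RBM
distribution equals
`∏ i, ((1 + e^{cᵢ + wᵢⱼ₁ + wᵢⱼ₂}) (1 + e^{cᵢ})) / ((1 + e^{cᵢ + wᵢⱼ₁}) (1 + e^{cᵢ + wᵢⱼ₂}))`;
in particular it is independent of the visible biases `b` and of the partition function. -/
theorem rbm_mult_two_point_interaction (m n : ℕ) (hm : 1 ≤ m) (hn : 1 ≤ n)
    (b : Fin m → ℝ) (c : Fin n → ℝ) (w : Fin n → Fin m → ℝ)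
    (j₁ j₂ : Fin m) (hj : j₁ ≠ j₂) :
    let q : (Fin m → Bool) → ℝ := fun v =>
      (∏ j : Fin m, Real.exp (b j * (if v j then (1 : ℝ) else 0))) *
        ∏ i : Fin n,
          (1 + Real.exp (c i + ∑ j : Fin m, w i j * (if v j then (1 : ℝ) else 0)))
    let Z : ℝ := ∑ v : Fin m → Bool, q v
    let p : (Fin m → Bool) → ℝ := fun v => q v / Z
    let e : Finset (Fin m) → (Fin m → Bool) := fun S j => decide (j ∈ S)
    (p (e {j₁, j₂}) * p (e ∅)) / (p (e {j₁}) * p (e {j₂})) =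
      ∏ i : Fin n,
        ((1 + Real.exp (c i + w i j₁ + w i j₂)) * (1 + Real.exp (c i))) /
          ((1 + Real.exp (c i + w i j₁)) * (1 + Real.exp (c i + w i j₂))) := by
  intro q Z p e
  have hqkey : ∀ S : Finset (Fin m), q (e S) =
      Real.exp (∑ j ∈ S, b j) * ∏ i, (1 + Real.exp (c i + ∑ j ∈ S, w i j)) := by
    intro S
    have h1 : ∀ f : Fin m → ℝ,
        (∑ j : Fin m, f j * (if (e S) j then (1:ℝ) else 0)) = ∑ j ∈ S, f j := by
      intro f
      simp only [e, decide_eq_true_eq, mul_ite, mul_one, mul_zero]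
      rw [Finset.sum_ite_mem, Finset.univ_inter]
    simp only [q, ← Real.exp_sum, h1]
  have hqpos : ∀ v, 0 < q v := by
    intro v
    apply mul_pos
    · exact Finset.prod_pos fun j _ => Real.exp_pos _
    · exact Finset.prod_pos fun i _ => by positivity
  have hZpos : 0 < Z := Finset.sum_pos (fun v _ => hqpos v) Finset.univ_nonempty
  have hp : (p (e {j₁, j₂}) * p (e ∅)) / (p (e {j₁}) * p (e {j₂})) =
      (q (e {j₁, j₂}) * q (e ∅)) / (q (e {j₁}) * q (e {j₂})) := by
    simp only [p]
    field_simp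
  rw [hp, hqkey, hqkey, hqkey, hqkey]
  simp only [Finset.sum_pair hj, Finset.sum_empty, Finset.sum_singleton]
  have hP : ∀ g : Fin n → ℝ, (0:ℝ) < ∏ i, (1 + Real.exp (c i + g i)) :=
    fun g => Finset.prod_pos fun i _ => by positivity
  rw [Finset.prod_div_distrib, Finset.prod_mul_distrib, Finset.prod_mul_distrib,
    Real.exp_zero, Real.exp_add]
  have h1 := (hP fun i => w i j₁).ne'
  have h2 := (hP fun i => w i j₂).ne'
  have hb1 := (Real.exp_pos (b j₁)).ne'
  have hb2 := (Real.exp_pos (b j₂)).ne'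
  simp only [add_zero] at *
  field_simp
  ring
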